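/- Let W : X → Y be a DMC with |X| = q, |Y| = M, and suppose there exists a constant C(q) such that at each step one can merge a pair of output symbols of the current channel (of output size i) with capacity loss at most C(q)·(1/i)^{q/(q−1)}. Performing M − μ such merges in succession yields a channel T with output alphabet of size μ satisfying 0 ≤ I(W) − I(T) ≤ C(q) Σ_{i=μ+1}^{M} (1/i)^{q/(q−1)} = O((1/μ)^{1/(q−1)}). -/

import Mathlib

open Finset

noncomputable section

/-- Symmetric capacity: mutual information between a uniform input and the output. -/
def symCap {X Y : Type*} [Fintype X] [Fintype Y] (W : X → Y → ℝ) : ℝ :=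
  ∑ y : Y, ∑ x : X, (W x y / (Fintype.card X : ℝ)) *
    Real.logb 2 (W x y * (Fintype.card X : ℝ) / ∑ x0 : X, W x0 y)

/-- Effective output alphabet size of a channel: the number of output symbols carrying
positive mass for some input. -/
def suppSize {X Y : Type*} (V : X → Y → ℝ) : ℕ :=
  Set.ncard {y : Y | ∃ x, V x y ≠ 0}

lemma step_ineq (q m : ℕ) (hq : 2 ≤ q) (hm : 1 ≤ m) :
    (1 / ((m:ℝ)+1)) ^ ((q : ℝ) / ((q : ℝ) - 1)) ≤
      ((q:ℝ)-1) * ((1/(m:ℝ)) ^ ((1:ℝ)/((q:ℝ)-1)) - (1/((m:ℝ)+1)) ^ ((1:ℝ)/((q:ℝ)-1))) := by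
  have hq1 : (2:ℝ) ≤ (q:ℝ) := by exact_mod_cast hq
  set r : ℝ := (m:ℝ) with hrdef
  have hr : (1:ℝ) ≤ r := by rw [hrdef]; exact_mod_cast hm
  have hr0 : (0:ℝ) < r := by linarith
  have hr1 : (0:ℝ) < r + 1 := by linarith
  set a : ℝ := (q:ℝ) - 1 with hadef
  have ha : (1:ℝ) ≤ a := by rw [hadef]; linarith
  have ha0 : (0:ℝ) < a := by linarith
  set s : ℝ := 1 / a with hsdef
  have hs0 : 0 < s := by positivity
  have hs1 : s ≤ 1 := by rw [hsdef, div_le_one ha0]; exact ha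
  have has : a * s = 1 := by rw [hsdef]; field_simp
  have hexp : (q:ℝ)/((q:ℝ)-1) = 1 + s := by
    rw [hsdef, hadef]; rw [eq_comm, one_add_div (by linarith)]; ring
  rw [hexp]
  -- Bernoulli
  have hB : ((1:ℝ) + (-(1/(r+1))))^s ≤ 1 + s * (-(1/(r+1))) :=
    rpow_one_add_le_one_add_mul_self (by rw [neg_le, neg_neg, div_le_one hr1]; linarith)
      hs0.le hs1
  have hrw : (1:ℝ) + (-(1/(r+1))) = r/(r+1) := by field_simp; ring
  rw [hrw] at hB
  have hu : s/(r+1) < 1 := by rw [div_lt_one hr1]; linarith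
  have hu0 : 0 < 1 - s/(r+1) := by linarith
  have hB' : (r/(r+1))^s ≤ 1 - s/(r+1) := by
    have : 1 + s * (-(1/(r+1))) = 1 - s/(r+1) := by ring
    linarith [hB, this ▸ hB]
  have hBpos : (0:ℝ) < (r/(r+1))^s := Real.rpow_pos_of_pos (by positivity) s
  -- invert
  have hinv : 1/(1 - s/(r+1)) ≤ ((r+1)/r)^s := by
    have h1 : ((r+1)/r)^s = ((r/(r+1))^s)⁻¹ := by
      rw [← Real.inv_rpow (by positivity)]
      congr 1
      field_simp
    rw [h1, one_div]
    exact inv_anti₀ hBpos hB'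
  have h2 : 1 + s/(r+1) ≤ 1/(1 - s/(r+1)) := by
    rw [le_div_iff₀ hu0]
    nlinarith [sq_nonneg (s/(r+1))]
  have hBB : 1 + s/(r+1) ≤ ((r+1)/r)^s := h2.trans hinv
  -- expand goal
  have hA : (0:ℝ) < (1/(r+1))^s := Real.rpow_pos_of_pos (by positivity) s
  have e1 : (1/(r+1) : ℝ)^(1+s) = (1/(r+1)) * (1/(r+1))^s := by
    rw [Real.rpow_add (by positivity), Real.rpow_one]
  have e2 : (1/r : ℝ)^s = ((r+1)/r)^s * (1/(r+1))^s := by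
    rw [← Real.mul_rpow (by positivity) (by positivity)]
    congr 1
    field_simp
  rw [e1, e2]
  set A : ℝ := (1/(r+1))^s
  set B : ℝ := ((r+1)/r)^s
  have key : (1/(r+1) : ℝ) ≤ a * (B - 1) := by
    have : a * (s/(r+1)) = 1/(r+1) := by
      rw [← mul_div_assoc, has]
    nlinarith
  nlinarith [mul_le_mul_of_nonneg_right key hA.le]

lemma sum_tail_bound (q μ : ℕ) (hq : 2 ≤ q) (hμ : 1 ≤ μ) :
    ∀ M : ℕ, μ ≤ M →
      ∑ i ∈ Finset.Icc (μ + 1) M, (1 / (i : ℝ)) ^ ((q : ℝ) / ((q : ℝ) - 1)) ≤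
        ((q:ℝ)-1) * ((1/(μ:ℝ)) ^ ((1:ℝ)/((q:ℝ)-1)) - (1/(M:ℝ)) ^ ((1:ℝ)/((q:ℝ)-1))) := by
  intro M hM
  induction M, hM using Nat.le_induction with
  | base => simp [Finset.Icc_eq_empty_of_lt (Nat.lt_succ_self μ)]
  | succ n hn ih =>
    rw [Finset.sum_Icc_succ_top (by omega)]
    have hn1 : 1 ≤ n := hμ.trans hn
    have hstep := step_ineq q n hq hn1
    have hcast : ((n+1 : ℕ) : ℝ) = (n:ℝ) + 1 := by push_cast; ring
    rw [hcast]
    linarith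

lemma merge_chain {X Y : Type*} [Fintype X] [Fintype Y] (q μ : ℕ) (C : ℝ)
    (hmerge : ∀ V : X → Y → ℝ, (∀ x y, 0 ≤ V x y) → (∀ x, ∑ y : Y, V x y = 1) →
      μ < suppSize V →
      ∃ V' : X → Y → ℝ, (∀ x y, 0 ≤ V' x y) ∧ (∀ x, ∑ y : Y, V' x y = 1) ∧
        suppSize V' = suppSize V - 1 ∧
        0 ≤ symCap V - symCap V' ∧
        symCap V - symCap V' ≤
          C * (1 / (suppSize V : ℝ)) ^ ((q : ℝ) / ((q : ℝ) - 1))) :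
    ∀ n : ℕ, μ ≤ n → ∀ V : X → Y → ℝ, (∀ x y, 0 ≤ V x y) → (∀ x, ∑ y : Y, V x y = 1) →
      suppSize V = n →
      ∃ T : X → Y → ℝ, (∀ x y, 0 ≤ T x y) ∧ (∀ x, ∑ y : Y, T x y = 1) ∧
        suppSize T = μ ∧ 0 ≤ symCap V - symCap T ∧
        symCap V - symCap T ≤
          C * ∑ i ∈ Finset.Icc (μ + 1) n, (1 / (i : ℝ)) ^ ((q : ℝ) / ((q : ℝ) - 1)) := by
  intro n hn
  induction n, hn using Nat.le_induction with
  | base =>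
    intro V hV0 hV1 hVs
    exact ⟨V, hV0, hV1, hVs, by simp, by
      simp [Finset.Icc_eq_empty_of_lt (Nat.lt_succ_self μ)]⟩
  | succ n hn ih =>
    intro V hV0 hV1 hVs
    obtain ⟨V', hV'0, hV'1, hV's, hd0, hd1⟩ := hmerge V hV0 hV1 (by omega)
    obtain ⟨T, hT0, hT1, hTs, he0, he1⟩ := ih V' hV'0 hV'1 (by omega)
    refine ⟨T, hT0, hT1, hTs, by linarith, ?_⟩
    rw [Finset.sum_Icc_succ_top (by omega), mul_add]
    rw [hVs] at hd1
    linarith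

/-- If from every channel with more than `μ` (effective) output symbols one can merge a
pair of output symbols of the current channel (of output size `i`) losing at most
`C(q)·(1/i)^{q/(q−1)}` of capacity, then `M − μ` successive merges yield a channel `T`
with `μ` output symbols and
`0 ≤ I(W) − I(T) ≤ C(q) Σ_{i=μ+1}^M (1/i)^{q/(q−1)} = O((1/μ)^{1/(q−1)})`. -/
theorem successive_degrading_bound {X Y : Type*} [Fintype X] [Fintype Y]
    (q μ M : ℕ) (hq : 2 ≤ q) (hX : Fintype.card X = q) (hμ : 1 ≤ μ) (hμM : μ ≤ M)
    (W : X → Y → ℝ) (hW0 : ∀ x y, 0 ≤ W x y) (hW1 : ∀ x, ∑ y : Y, W x y = 1)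
    (hM : suppSize W = M) (C : ℝ) (hC : 0 ≤ C)
    (hmerge : ∀ V : X → Y → ℝ, (∀ x y, 0 ≤ V x y) → (∀ x, ∑ y : Y, V x y = 1) →
      μ < suppSize V →
      ∃ V' : X → Y → ℝ, (∀ x y, 0 ≤ V' x y) ∧ (∀ x, ∑ y : Y, V' x y = 1) ∧
        suppSize V' = suppSize V - 1 ∧
        0 ≤ symCap V - symCap V' ∧
        symCap V - symCap V' ≤
          C * (1 / (suppSize V : ℝ)) ^ ((q : ℝ) / ((q : ℝ) - 1))) :
    ∃ T : X → Y → ℝ, (∀ x y, 0 ≤ T x y) ∧ (∀ x, ∑ y : Y, T x y = 1) ∧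
      suppSize T = μ ∧
      0 ≤ symCap W - symCap T ∧
      symCap W - symCap T ≤
        C * ∑ i ∈ Finset.Icc (μ + 1) M, (1 / (i : ℝ)) ^ ((q : ℝ) / ((q : ℝ) - 1)) ∧
      C * (∑ i ∈ Finset.Icc (μ + 1) M, (1 / (i : ℝ)) ^ ((q : ℝ) / ((q : ℝ) - 1))) ≤
        C * ((q : ℝ) - 1) * (1 / (μ : ℝ)) ^ ((1 : ℝ) / ((q : ℝ) - 1)) := by
  obtain ⟨T, hT0, hT1, hTs, h0, h1⟩ := merge_chain q μ C hmerge M hμM W hW0 hW1 hM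
  refine ⟨T, hT0, hT1, hTs, h0, h1, ?_⟩
  have hsum := sum_tail_bound q μ hq hμ M hμM
  have hMnn : (0:ℝ) ≤ (1/(M:ℝ)) ^ ((1:ℝ)/((q:ℝ)-1)) := Real.rpow_nonneg (by positivity) _
  calc C * (∑ i ∈ Finset.Icc (μ + 1) M, (1 / (i : ℝ)) ^ ((q : ℝ) / ((q : ℝ) - 1)))
      ≤ C * (((q:ℝ)-1) * ((1/(μ:ℝ)) ^ ((1:ℝ)/((q:ℝ)-1)) - (1/(M:ℝ)) ^ ((1:ℝ)/((q:ℝ)-1)))) :=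
        mul_le_mul_of_nonneg_left hsum hC
    _ ≤ C * ((q : ℝ) - 1) * (1 / (μ : ℝ)) ^ ((1 : ℝ) / ((q : ℝ) - 1)) := by
        have hq1 : (1:ℝ) ≤ (q:ℝ) - 1 := by
          have : (2:ℝ) ≤ (q:ℝ) := by exact_mod_cast hq
          linarith
        nlinarith [mul_nonneg hC (by linarith : (0:ℝ) ≤ (q:ℝ)-1)]
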